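/- Let Γ be a simplicial graph, 𝒢 = (G_u) a family of nontrivial groups indexed by the vertices of Γ, and let u, v be two distinct non-adjacent vertices of Γ. Let N be the normal closure in Γ𝒢 of the union of the vertex subgroups G_w for all vertices w ∉ {u,v}. Then the homomorphism from the free product G_u ∗ G_v to the quotient Γ𝒢/N induced by the inclusions of G_u and G_v into Γ𝒢 followed by the quotient map is an isomorphism. -/

import Mathlib

/-- The set of commutation relators defining a graph product. -/
def graphProdRels {V : Type*} (Γ : SimpleGraph V) (G : V → Type*) [∀ w, Group (G w)] :
    Set (Monoid.CoprodI G) :=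
  {x | ∃ (u v : V) (_ : Γ.Adj u v) (g : G u) (h : G v),
    x = Monoid.CoprodI.of g * Monoid.CoprodI.of h *
      (Monoid.CoprodI.of g)⁻¹ * (Monoid.CoprodI.of h)⁻¹}

/-- The graph product of the family of groups `G` over the simplicial graph `Γ`. -/
def GraphProduct {V : Type*} (Γ : SimpleGraph V) (G : V → Type*) [∀ w, Group (G w)] :=
  Monoid.CoprodI G ⧸ Subgroup.normalClosure (graphProdRels Γ G)

instance {V : Type*} (Γ : SimpleGraph V) (G : V → Type*) [∀ w, Group (G w)] :
    Group (GraphProduct Γ G) :=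
  inferInstanceAs (Group (Monoid.CoprodI G ⧸ Subgroup.normalClosure (graphProdRels Γ G)))

/-- The canonical map from a vertex group into the graph product. -/
def GraphProduct.of {V : Type*} (Γ : SimpleGraph V) (G : V → Type*) [∀ w, Group (G w)]
    (u : V) : G u →* GraphProduct Γ G :=
  (QuotientGroup.mk' (Subgroup.normalClosure (graphProdRels Γ G))).comp Monoid.CoprodI.of

/-- The vertex subgroup of the graph product at the vertex `u`. -/
def vertexSubgroup {V : Type*} (Γ : SimpleGraph V) (G : V → Type*) [∀ w, Group (G w)]
    (u : V) : Subgroup (GraphProduct Γ G) :=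
  (GraphProduct.of Γ G u).range

/-- An automorphism of the graph product is conjugating if it sends each vertex subgroup to
a conjugate of a vertex subgroup. -/
def IsConjugating {V : Type*} (Γ : SimpleGraph V) (G : V → Type*) [∀ w, Group (G w)]
    (φ : MulAut (GraphProduct Γ G)) : Prop :=
  ∀ u : V, ∃ (v : V) (g : GraphProduct Γ G),
    Subgroup.map φ.toMonoidHom (vertexSubgroup Γ G u) =
      Subgroup.map (MulAut.conj g).toMonoidHom (vertexSubgroup Γ G v)

/-- An automorphism of the graph product is in `PConjAut` if it sends each vertex subgroup to
a conjugate of itself. -/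
def IsPConjugating {V : Type*} (Γ : SimpleGraph V) (G : V → Type*) [∀ w, Group (G w)]
    (φ : MulAut (GraphProduct Γ G)) : Prop :=
  ∀ u : V, ∃ g : GraphProduct Γ G,
    Subgroup.map φ.toMonoidHom (vertexSubgroup Γ G u) =
      Subgroup.map (MulAut.conj g).toMonoidHom (vertexSubgroup Γ G u)

/-- A vertex is universal if it is adjacent to every other vertex. -/
def IsUniversal {V : Type*} (Γ : SimpleGraph V) (u : V) : Prop :=
  ∀ v : V, v ≠ u → Γ.Adj u v

/-- Some vertex is non-adjacent to at least two other vertices. -/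
def HasVertexWithTwoNonNeighbors {V : Type*} (Γ : SimpleGraph V) : Prop :=
  ∃ u v w : V, v ≠ w ∧ v ≠ u ∧ w ≠ u ∧ ¬Γ.Adj u v ∧ ¬Γ.Adj u w

/-- A group `G` is SQ-universal if every countable group embeds into a quotient of `G`. -/
def SQUniversal (G : Type*) [Group G] : Prop :=
  ∀ (Q : Type) [Group Q] [Countable Q],
    ∃ (N : Subgroup G) (hN : N.Normal),
      haveI := hN
      ∃ f : Q →* G ⧸ N, Function.Injective f

/-- A quasimorphism on a group. -/
def IsQuasimorphism {H : Type*} [Group H] (f : H → ℝ) : Prop :=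
  ∃ C : ℝ, 0 ≤ C ∧ ∀ g h : H, |f (g * h) - f g - f h| ≤ C

/-- A homogeneous map on a group. -/
def IsHomogeneous {H : Type*} [Group H] (f : H → ℝ) : Prop :=
  ∀ (g : H) (k : ℤ), f (g ^ k) = (k : ℝ) * f g

/-- The space of homogeneous quasimorphisms of `H` is infinite-dimensional, expressed as: it is
not contained in the span of any finite set of functions. -/
def HasManyQuasimorphisms (H : Type*) [Group H] : Prop :=
  ¬ ∃ s : Finset (H → ℝ), ∀ f : H → ℝ, IsQuasimorphism f → IsHomogeneous f →
      f ∈ Submodule.span ℝ (s : Set (H → ℝ))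

/-- A group virtually has many quasimorphisms if some finite-index subgroup has an
infinite-dimensional space of homogeneous quasimorphisms. -/
def VirtuallyManyQuasimorphisms (G : Type*) [Group G] : Prop :=
  ∃ H : Subgroup G, H.FiniteIndex ∧ HasManyQuasimorphisms H

/-- A group is boundedly generated if it is the product of finitely many cyclic subgroups. -/
def BoundedlyGenerated (G : Type*) [Group G] : Prop :=
  ∃ l : List G, ∀ g : G, ∃ m : List ℤ, m.length = l.length ∧
    g = (List.zipWith (fun x (k : ℤ) => x ^ k) l m).prod

/-- A group is large if a finite-index subgroup surjects onto a nonabelian free group. -/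
def IsLarge (G : Type*) [Group G] : Prop :=
  ∃ H : Subgroup G, H.FiniteIndex ∧ ∃ f : H →* FreeGroup (Fin 2), Function.Surjective f

/-- A group is virtually free abelian if it has a finite-index subgroup isomorphic to `ℤⁿ`. -/
def VirtuallyFreeAbelian (G : Type*) [Group G] : Prop :=
  ∃ H : Subgroup G, H.FiniteIndex ∧ ∃ n : ℕ, Nonempty (H ≃* Multiplicative (Fin n → ℤ))

/-- The relators of a right-angled Coxeter group. -/
def racgRels {V : Type*} (Γ : SimpleGraph V) : Set (FreeGroup V) :=
  {w | (∃ v : V, w = FreeGroup.of v * FreeGroup.of v) ∨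
    ∃ u v : V, Γ.Adj u v ∧ w = (FreeGroup.of u * FreeGroup.of v) ^ 2}

/-- The right-angled Coxeter group of a simplicial graph. -/
def RACG {V : Type*} (Γ : SimpleGraph V) := PresentedGroup (racgRels Γ)

instance {V : Type*} (Γ : SimpleGraph V) : Group (RACG Γ) :=
  inferInstanceAs (Group (PresentedGroup (racgRels Γ)))

section Aux

open Monoid

variable {V : Type} (Γ : SimpleGraph V) (G : V → Type) [∀ w, Group (G w)]

/-- The map sending each vertex group to `G u ∗ G v` (trivially if `w ∉ {u, v}`). -/
noncomputable def vmap (u v w : V) : G w →* Monoid.Coprod (G u) (G v) := by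
  classical
  exact if h : w = u then h.symm ▸ Monoid.Coprod.inl
    else if h' : w = v then h'.symm ▸ Monoid.Coprod.inr
    else 1

variable {G}

lemma vmap_u (u v : V) : vmap G u v u = Monoid.Coprod.inl := by
  simp [vmap]

lemma vmap_v (u v : V) (huv : u ≠ v) : vmap G u v v = Monoid.Coprod.inr := by
  simp [vmap, huv.symm]

lemma vmap_other (u v w : V) (h1 : w ≠ u) (h2 : w ≠ v) : vmap G u v w = 1 := by
  simp [vmap, h1, h2]

variable {Γ}

lemma relKill (u v : V) (hadj : ¬Γ.Adj u v) :
    ∀ x ∈ graphProdRels Γ G, Monoid.CoprodI.lift (vmap G u v) x = 1 := by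
  rintro x ⟨a, b, hab, g, h, rfl⟩
  simp only [map_mul, map_inv, Monoid.CoprodI.lift_of]
  set X := vmap G u v a g
  set Y := vmap G u v b h
  suffices hc : X * Y = Y * X by
    rw [hc]; group
  by_cases hb : b ≠ u ∧ b ≠ v
  · have : Y = 1 := by simp [Y, vmap_other u v b hb.1 hb.2]
    simp [this]
  by_cases ha : a ≠ u ∧ a ≠ v
  · have : X = 1 := by simp [X, vmap_other u v a ha.1 ha.2]
    simp [this]
  -- both a and b are in {u, v}; derive a contradiction
  exfalso
  rw [not_and_or, not_not, not_not] at ha hb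
  have hne : a ≠ b := hab.ne
  rcases ha with rfl | rfl <;> rcases hb with rfl | rfl
  · exact hne rfl
  · exact hadj hab
  · exact hadj hab.symm
  · exact hne rfl

variable (Γ G) in
/-- The descended map on the graph product. -/
noncomputable def gpToCoprod (u v : V) (hadj : ¬Γ.Adj u v) :
    GraphProduct Γ G →* Monoid.Coprod (G u) (G v) :=
  QuotientGroup.lift _ (Monoid.CoprodI.lift (vmap G u v))
    (fun x hx => Subgroup.normalClosure_le_normal
      (fun y hy => relKill u v hadj y hy) hx)

lemma gpToCoprod_of (u v : V) (hadj : ¬Γ.Adj u v) (w : V) (g : G w) :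
    gpToCoprod Γ G u v hadj (GraphProduct.of Γ G w g) = vmap G u v w g := by
  show Monoid.CoprodI.lift (vmap G u v) (Monoid.CoprodI.of g) = _
  exact Monoid.CoprodI.lift_of _ _

variable (Γ G) in
/-- The further descended map on the quotient. -/
noncomputable def quotToCoprod (u v : V) (hadj : ¬Γ.Adj u v) :
    (GraphProduct Γ G ⧸ Subgroup.normalClosure
      (⋃ w ∈ ({u, v} : Set V)ᶜ, (vertexSubgroup Γ G w : Set (GraphProduct Γ G)))) →*
      Monoid.Coprod (G u) (G v) :=
  QuotientGroup.lift _ (gpToCoprod Γ G u v hadj) (by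
    intro x hx
    refine Subgroup.normalClosure_le_normal ?_ hx
    rintro y hy
    simp only [Set.mem_iUnion] at hy
    obtain ⟨w, hw, hy⟩ := hy
    simp only [Set.mem_compl_iff, Set.mem_insert_iff, Set.mem_singleton_iff, not_or] at hw
    obtain ⟨g, rfl⟩ := hy
    show gpToCoprod Γ G u v hadj (GraphProduct.of Γ G w g) = 1
    rw [gpToCoprod_of, vmap_other u v w hw.1 hw.2, MonoidHom.one_apply])

end Aux

/-- The natural map `G_u ∗ G_v → Γ𝒢 / N` is an isomorphism, where `N` is the normal closure
of the vertex subgroups other than `G_u` and `G_v`, and `u, v` are non-adjacent. -/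
theorem coprod_to_quotient_bijective {V : Type} (Γ : SimpleGraph V) (G : V → Type)
    [∀ w, Group (G w)] [∀ w, Nontrivial (G w)] (u v : V) (huv : u ≠ v) (hadj : ¬Γ.Adj u v) :
    Function.Bijective
      (Monoid.Coprod.lift
        ((QuotientGroup.mk' (Subgroup.normalClosure
            (⋃ w ∈ ({u, v} : Set V)ᶜ, (vertexSubgroup Γ G w : Set (GraphProduct Γ G))))).comp
          (GraphProduct.of Γ G u))
        ((QuotientGroup.mk' (Subgroup.normalClosure
            (⋃ w ∈ ({u, v} : Set V)ᶜ, (vertexSubgroup Γ G w : Set (GraphProduct Γ G))))).comp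
          (GraphProduct.of Γ G v))) := by
  set N := Subgroup.normalClosure
      (⋃ w ∈ ({u, v} : Set V)ᶜ, (vertexSubgroup Γ G w : Set (GraphProduct Γ G)))
  set φ := Monoid.Coprod.lift
      ((QuotientGroup.mk' N).comp (GraphProduct.of Γ G u))
      ((QuotientGroup.mk' N).comp (GraphProduct.of Γ G v)) with hφ
  set ψ := quotToCoprod Γ G u v hadj with hψ
  have h1 : ψ.comp φ = MonoidHom.id _ := by
    apply Monoid.Coprod.hom_ext <;> ext g
    · show ψ (φ (Monoid.Coprod.inl g)) = Monoid.Coprod.inl g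
      rw [hφ, Monoid.Coprod.lift_apply_inl]
      show ψ (QuotientGroup.mk (GraphProduct.of Γ G u g)) = _
      rw [hψ]
      show gpToCoprod Γ G u v hadj (GraphProduct.of Γ G u g) = _
      rw [gpToCoprod_of, vmap_u]
    · show ψ (φ (Monoid.Coprod.inr g)) = Monoid.Coprod.inr g
      rw [hφ, Monoid.Coprod.lift_apply_inr]
      show ψ (QuotientGroup.mk (GraphProduct.of Γ G v g)) = _
      rw [hψ]
      show gpToCoprod Γ G u v hadj (GraphProduct.of Γ G v g) = _
      rw [gpToCoprod_of, vmap_v u v huv]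
  have h2 : φ.comp ψ = MonoidHom.id _ := by
    apply QuotientGroup.monoidHom_ext
    apply QuotientGroup.monoidHom_ext
    apply Monoid.CoprodI.ext_hom
    intro w
    ext g
    show φ (ψ (QuotientGroup.mk (QuotientGroup.mk (Monoid.CoprodI.of g)))) =
      QuotientGroup.mk (QuotientGroup.mk (Monoid.CoprodI.of g))
    have : ψ (QuotientGroup.mk (QuotientGroup.mk (Monoid.CoprodI.of g))) = vmap G u v w g := by
      rw [hψ]
      show gpToCoprod Γ G u v hadj (GraphProduct.of Γ G w g) = _
      rw [gpToCoprod_of]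
    rw [this]
    by_cases hwu : w = u
    · subst hwu
      rw [vmap_u, hφ, Monoid.Coprod.lift_apply_inl]
      rfl
    by_cases hwv : w = v
    · subst hwv
      rw [vmap_v _ _ huv, hφ, Monoid.Coprod.lift_apply_inr]
      rfl
    · rw [vmap_other u v w hwu hwv, MonoidHom.one_apply, map_one]
      symm
      show (QuotientGroup.mk (GraphProduct.of Γ G w g) : GraphProduct Γ G ⧸ N) = 1
      rw [QuotientGroup.eq_one_iff]
      refine Subgroup.subset_normalClosure ?_
      simp only [Set.mem_iUnion]
      refine ⟨w, by simp [hwu, hwv], ?_⟩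
      exact ⟨g, rfl⟩
  exact Function.bijective_iff_has_inverse.2 ⟨ψ,
    fun x => congrFun (congrArg (fun f => f.toFun) h1) x,
    fun x => congrFun (congrArg (fun f => f.toFun) h2) x⟩
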